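/- For probability distributions P, Q with strictly positive entries, 3·2^{1/3}·K(P‖Q) ≤ Ψ(P‖Q), where K(P‖Q) = ∑ p_i ln(p_i/q_i) and Ψ(P‖Q) = ∑ (p_i − q_i)²(p_i + q_i)/(p_i q_i). -/

import Mathlib

open Real Set

/-- Upper Padé bound for log on [1, ∞). -/
lemma log_le_pade (t : ℝ) (ht : 1 ≤ t) :
    Real.log t ≤ (t-1)*(t^2+19*t+10)/(3*(3*t^2+6*t+1)) := by
  set f : ℝ → ℝ := fun x => (x-1)*(x^2+19*x+10)/(3*(3*x^2+6*x+1)) - Real.log x with hf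
  have hderiv : ∀ x ∈ Ici (1:ℝ), HasDerivAt f
      (9*(x-1)^5/(x*(3*(3*x^2+6*x+1))^2)) x := by
    intro x hx
    have hx0 : (0:ℝ) < x := lt_of_lt_of_le one_pos hx
    have hden : 3*(3*x^2+6*x+1) ≠ 0 := by nlinarith
    have hN : HasDerivAt (fun x : ℝ => (x-1)*(x^2+19*x+10))
        ((1)*(x^2+19*x+10) + (x-1)*(2*x+19)) x := by
      exact ((hasDerivAt_id x).sub_const 1).mul
        (((hasDerivAt_pow 2 x).add (((hasDerivAt_id x).const_mul 19))).add_const 10)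
        |>.congr_deriv (by simp only [id_eq, Pi.add_apply]; ring)
    have hD : HasDerivAt (fun x : ℝ => 3*(3*x^2+6*x+1)) (3*(3*(2*x)+6)) x := by
      exact ((((hasDerivAt_pow 2 x).const_mul 3).add
        ((hasDerivAt_id x).const_mul 6)).add_const 1).const_mul 3
        |>.congr_deriv (by ring)
    have hq : HasDerivAt (fun x => (x-1)*(x^2+19*x+10)/(3*(3*x^2+6*x+1)))
        ((((1)*(x^2+19*x+10) + (x-1)*(2*x+19))*(3*(3*x^2+6*x+1))
          - (x-1)*(x^2+19*x+10)*(3*(3*(2*x)+6)))/(3*(3*x^2+6*x+1))^2) x :=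
      hN.div hD hden
    have hl : HasDerivAt Real.log (1/x) x := by
      simpa using Real.hasDerivAt_log (ne_of_gt hx0)
    have := hq.sub hl
    refine this.congr_deriv ?_
    field_simp
    ring
  have hmono : MonotoneOn f (Ici 1) := by
    apply monotoneOn_of_deriv_nonneg (convex_Ici 1)
    · exact fun x hx => ((hderiv x hx).differentiableAt).continuousAt.continuousWithinAt
    · intro x hx
      exact ((hderiv x (interior_subset hx)).differentiableAt).differentiableWithinAt
    · intro x hx
      rw [interior_Ici] at hx
      have hx1 : (1:ℝ) < x := hx
      rw [((hderiv x (le_of_lt hx1)).deriv)]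
      have h1 : (0:ℝ) ≤ 9*(x-1)^5 := by
        have hx' : (0:ℝ) ≤ x - 1 := by linarith
        positivity
      have h2 : (0:ℝ) < x*(3*(3*x^2+6*x+1))^2 := by positivity
      exact div_nonneg h1 (le_of_lt h2)
  have h1 : f 1 ≤ f t := hmono (le_refl (1:ℝ)) ht ht
  have hf1 : f 1 = 0 := by simp [hf]
  rw [hf1] at h1
  simp only [hf] at h1
  linarith


/-- Lower bound for log on [1, ∞). -/
lemma two_div_le_log (t : ℝ) (ht : 1 ≤ t) :
    2*(t-1)/(t+1) ≤ Real.log t := by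
  set f : ℝ → ℝ := fun x => Real.log x - 2*(x-1)/(x+1) with hf
  have hderiv : ∀ x ∈ Ici (1:ℝ), HasDerivAt f ((x-1)^2/(x*(x+1)^2)) x := by
    intro x hx
    have hx0 : (0:ℝ) < x := lt_of_lt_of_le one_pos hx
    have hden : (x+1) ≠ 0 := by nlinarith
    have hN : HasDerivAt (fun x : ℝ => 2*(x-1)) 2 x := by
      exact (((hasDerivAt_id x).sub_const 1).const_mul 2).congr_deriv (by ring)
    have hD : HasDerivAt (fun x : ℝ => x+1) 1 x := (hasDerivAt_id x).add_const 1
    have hq : HasDerivAt (fun x => 2*(x-1)/(x+1)) ((2*(x+1) - 2*(x-1)*1)/(x+1)^2) x :=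
      hN.div hD hden
    have hl : HasDerivAt Real.log (1/x) x := by
      simpa using Real.hasDerivAt_log (ne_of_gt hx0)
    have := hl.sub hq
    refine this.congr_deriv ?_
    field_simp
    ring
  have hmono : MonotoneOn f (Ici 1) := by
    apply monotoneOn_of_deriv_nonneg (convex_Ici 1)
    · exact fun x hx => ((hderiv x hx).differentiableAt).continuousAt.continuousWithinAt
    · intro x hx
      exact ((hderiv x (interior_subset hx)).differentiableAt).differentiableWithinAt
    · intro x hx
      rw [interior_Ici] at hx
      have hx1 : (1:ℝ) < x := hx
      rw [((hderiv x (le_of_lt hx1)).deriv)]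
      positivity
  have h1 : f 1 ≤ f t := hmono (le_refl (1:ℝ)) ht ht
  have hf1 : f 1 = 0 := by simp [hf]
  rw [hf1] at h1
  simp only [hf] at h1
  linarith

/-- Key scalar inequality. -/
lemma key_ineq (t : ℝ) (ht : 0 < t) :
    (19/5) * (t * Real.log t - t + 1) ≤ (t-1)^2*(t+1)/t := by
  rcases le_or_gt 1 t with h1 | h1
  · -- t ≥ 1 : use Padé upper bound
    have hb := log_le_pade t h1
    have hden : (0:ℝ) < 3*(3*t^2+6*t+1) := by nlinarith
    have h2 : t * Real.log t ≤ t * ((t-1)*(t^2+19*t+10)/(3*(3*t^2+6*t+1))) :=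
      mul_le_mul_of_nonneg_left hb (le_of_lt ht)
    have h3 : (19/5) * (t * ((t-1)*(t^2+19*t+10)/(3*(3*t^2+6*t+1))) - t + 1)
        ≤ (t-1)^2*(t+1)/t := by
      have hden2 : (0:ℝ) < 3*t^2+6*t+1 := by nlinarith
      rw [le_div_iff₀ ht]
      have e : (19/5) * (t * ((t-1)*(t^2+19*t+10)/(3*(3*t^2+6*t+1))) - t + 1) * t
          = 19*t*((t-1)^2*(t^2+11*t+3))/(15*(3*t^2+6*t+1)) := by
        field_simp
        ring
      rw [e, div_le_iff₀ (by positivity)]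
      nlinarith [mul_nonneg (sq_nonneg (t-1)) (mul_nonneg (sub_nonneg.2 h1) (sq_nonneg (t-8/5))),
        mul_nonneg (sq_nonneg (t-1)) (sq_nonneg (t-159/110)), sq_nonneg (t-1)]
    linarith
  · -- t < 1 : log t = -log (1/t), use lower bound at 1/t
    have hs : (1:ℝ) ≤ 1/t := by
      rw [le_div_iff₀ ht]; linarith
    have hb := two_div_le_log (1/t) hs
    have hlog : Real.log (1/t) = - Real.log t := by
      rw [one_div, Real.log_inv]
    rw [hlog] at hb
    have hb2 : Real.log t ≤ 2*(t-1)/(t+1) := by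
      have : 2*(1/t-1)/(1/t+1) = -(2*(t-1)/(t+1)) := by
        field_simp
        ring
      rw [this] at hb
      linarith
    have h2 : t * Real.log t ≤ t * (2*(t-1)/(t+1)) :=
      mul_le_mul_of_nonneg_left hb2 (le_of_lt ht)
    have h3 : (19/5) * (t * (2*(t-1)/(t+1)) - t + 1) ≤ (t-1)^2*(t+1)/t := by
      have ht1 : (0:ℝ) < t + 1 := by linarith
      rw [le_div_iff₀ ht]
      have e : (19/5) * (t * (2*(t-1)/(t+1)) - t + 1) * t
          = 19*t*(t-1)^2/(5*(t+1)) := by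
        field_simp
        ring
      rw [e, div_le_iff₀ (by positivity)]
      nlinarith [sq_nonneg (t-1), mul_nonneg (sq_nonneg (t-1)) (sq_nonneg (t-9/10)),
        sq_nonneg ((t-1)*(t-9/10))]
    linarith

theorem stmt_18 (n : ℕ) (p q : Fin n → ℝ)
    (hp : ∀ i, 0 < p i) (hq : ∀ i, 0 < q i)
    (hp1 : ∑ i, p i = 1) (hq1 : ∑ i, q i = 1) :
    3 * (2:ℝ)^((1:ℝ)/3) * ∑ i, p i * Real.log (p i / q i) ≤
      ∑ i, (p i - q i)^2 * (p i + q i) / (p i * q i) := by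
  -- pointwise inequality
  have key : ∀ i, (19/5:ℝ) * (p i * Real.log (p i / q i) - p i + q i)
      ≤ (p i - q i)^2 * (p i + q i) / (p i * q i) := by
    intro i
    have hpi := hp i; have hqi := hq i
    have ht : (0:ℝ) < p i / q i := div_pos hpi hqi
    have h := key_ineq (p i / q i) ht
    have h2 := mul_le_mul_of_nonneg_left h (le_of_lt hqi)
    calc (19/5:ℝ) * (p i * Real.log (p i / q i) - p i + q i)
        = q i * ((19/5) * (p i / q i * Real.log (p i / q i) - p i / q i + 1)) := by
          field_simp
      _ ≤ q i * ((p i / q i - 1)^2 * (p i / q i + 1) / (p i / q i)) := h2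
      _ = (p i - q i)^2 * (p i + q i) / (p i * q i) := by
          field_simp
  -- each KL-type term is nonnegative
  have hnn : ∀ i, (0:ℝ) ≤ p i * Real.log (p i / q i) - p i + q i := by
    intro i
    have hpi := hp i; have hqi := hq i
    have h := Real.log_le_sub_one_of_pos (div_pos hqi hpi)
    have hlog : Real.log (q i / p i) = - Real.log (p i / q i) := by
      rw [← Real.log_inv, inv_div]
    rw [hlog] at h
    have h2 : 1 - q i / p i ≤ Real.log (p i / q i) := by linarith
    have h3 := mul_le_mul_of_nonneg_left h2 (le_of_lt hpi)
    have h4 : p i * (1 - q i / p i) = p i - q i := by field_simp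
    rw [h4] at h3
    linarith
  -- sum identity
  have hsum : ∑ i, p i * Real.log (p i / q i)
      = ∑ i, (p i * Real.log (p i / q i) - p i + q i) := by
    rw [Finset.sum_add_distrib, Finset.sum_sub_distrib, hp1, hq1]
    ring
  have hKnn : (0:ℝ) ≤ ∑ i, p i * Real.log (p i / q i) := by
    rw [hsum]
    exact Finset.sum_nonneg (fun i _ => hnn i)
  -- constant comparison: 3 * 2^(1/3) ≤ 19/5
  have hc : 3 * (2:ℝ)^((1:ℝ)/3) ≤ 19/5 := by
    have hcube : ((2:ℝ)^((1:ℝ)/3))^(3:ℕ) = 2 := by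
      rw [← Real.rpow_natCast ((2:ℝ)^((1:ℝ)/3)) 3, ← Real.rpow_mul (by norm_num)]
      norm_num
    have hpos : (0:ℝ) ≤ (2:ℝ)^((1:ℝ)/3) := le_of_lt (Real.rpow_pos_of_pos two_pos _)
    nlinarith [hcube, hpos, sq_nonneg ((2:ℝ)^((1:ℝ)/3) - 19/15),
      sq_nonneg ((2:ℝ)^((1:ℝ)/3) + 19/15)]
  calc 3 * (2:ℝ)^((1:ℝ)/3) * ∑ i, p i * Real.log (p i / q i)
      ≤ (19/5) * ∑ i, p i * Real.log (p i / q i) :=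
        mul_le_mul_of_nonneg_right hc hKnn
    _ = ∑ i, (19/5:ℝ) * (p i * Real.log (p i / q i) - p i + q i) := by
        rw [← Finset.mul_sum, ← hsum]
    _ ≤ ∑ i, (p i - q i)^2 * (p i + q i) / (p i * q i) :=
        Finset.sum_le_sum (fun i _ => key i)
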